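/- Let c₂ := 2·B(β+1, β+1)·(2β+1)/(3(1−β)). Then the function f(s) := c₂·h(s)² = c₂·(s(1−s))^β satisfies Kf(s) = f(s) for every s ∈ [0,1], where Kf(s) := (2/(2β+1))·[∫_s^1 x^{2β}·f(s/x) dx + ∫_0^s (1−x)^{2β}·f((1−s)/(1−x)) dx] + 2·B(β+1, β+1)·h(s)²/(β+1). That is, c₂·h² is a fixed point of the second-moment integral operator K. -/

import Mathlib

open MeasureTheory Real Set

/-- The exponent `β = (√17 - 3)/2`, the positive root of `(β+1)(β+2) = 4`. -/
noncomputable def β : ℝ := (Real.sqrt 17 - 3) / 2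

lemma beta_pos : 0 < β := by
  have h := Real.sq_sqrt (by norm_num : (17:ℝ) ≥ 0)
  have h2 := Real.sqrt_nonneg (17:ℝ)
  unfold β; nlinarith

lemma beta_lt_one : β < 1 := by
  have h := Real.sq_sqrt (by norm_num : (17:ℝ) ≥ 0)
  have h2 := Real.sqrt_nonneg (17:ℝ)
  unfold β; nlinarith

lemma beta_sq : β ^ 2 + 3 * β = 2 := by
  have h := Real.sq_sqrt (by norm_num : (17:ℝ) ≥ 0)
  unfold β; nlinarith

lemma key {s x : ℝ} (hs : 0 ≤ s) (hx : 0 < x) (hsx : s ≤ x) :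
    x ^ (2*β) * ((s/x) * (1 - s/x)) ^ β = s ^ β * (x - s) ^ β := by
  have hx' : (x:ℝ) ≠ 0 := ne_of_gt hx
  have e : (1 : ℝ) - s/x = (x - s)/x := by rw [sub_div, div_self hx']
  have h1 : s/x * (1 - s/x) = s * (x - s) / x ^ 2 := by
    rw [e, div_mul_div_comm, sq]
  have h2 : ((x:ℝ) ^ 2) ^ β = x ^ (2*β) := by
    rw [← Real.rpow_natCast x 2, ← Real.rpow_mul hx.le]; norm_num
  have hxne : x ^ (2*β) ≠ 0 := by positivity
  rw [h1, Real.div_rpow (by nlinarith) (by positivity), h2,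
      Real.mul_rpow hs (by linarith)]
  rw [mul_comm, div_mul_cancel₀ _ hxne]

lemma int_shift {s : ℝ} (hs : 0 ≤ s) (hs1 : s ≤ 1) :
    (∫ x in s..1, (x - s) ^ β) = (1-s) ^ (β+1) / (β+1) := by
  have h := intervalIntegral.integral_comp_sub_right (fun u => u ^ β) s (a := s) (b := 1)
  simp only [sub_self] at h
  rw [h, integral_rpow (Or.inl (by linarith [beta_pos] : (-1:ℝ) < β)),
      Real.zero_rpow (by linarith [beta_pos] : β + 1 ≠ 0)]
  ring

lemma int_shift2 {s : ℝ} (hs : 0 ≤ s) (hs1 : s ≤ 1) :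
    (∫ x in (0:ℝ)..s, (s - x) ^ β) = s ^ (β+1) / (β+1) := by
  have h := intervalIntegral.integral_comp_sub_left (fun u => u ^ β) s (a := 0) (b := s)
  simp only [sub_self, sub_zero] at h
  rw [h, integral_rpow (Or.inl (by linarith [beta_pos] : (-1:ℝ) < β)),
      Real.zero_rpow (by linarith [beta_pos] : β + 1 ≠ 0)]
  ring

lemma int1 {s : ℝ} (hs : 0 < s) (hs1 : s ≤ 1) (c : ℝ) :
    (∫ x in s..1, x ^ (2*β) * (c * ((s/x) * (1 - s/x)) ^ β))
      = c * s ^ β * ((1-s) ^ (β+1) / (β+1)) := by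
  have h1 : Set.EqOn (fun x => x ^ (2*β) * (c * ((s/x) * (1 - s/x)) ^ β))
      (fun x => (c * s ^ β) * (x - s) ^ β) (Set.uIcc s 1) := by
    intro x hx
    rw [Set.uIcc_of_le hs1] at hx
    have hk := key hs.le (lt_of_lt_of_le hs hx.1) hx.1
    simp only
    calc x ^ (2*β) * (c * ((s/x) * (1 - s/x)) ^ β)
        = c * (x ^ (2*β) * ((s/x) * (1 - s/x)) ^ β) := by ring
      _ = (c * s ^ β) * (x - s) ^ β := by rw [hk]; ring
  rw [intervalIntegral.integral_congr h1, intervalIntegral.integral_const_mul,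
      int_shift hs.le hs1]

lemma int2 {s : ℝ} (hs : 0 ≤ s) (hs1 : s < 1) (c : ℝ) :
    (∫ x in (0:ℝ)..s, (1-x) ^ (2*β) * (c * (((1-s)/(1-x)) * (1 - (1-s)/(1-x))) ^ β))
      = c * (1-s) ^ β * (s ^ (β+1) / (β+1)) := by
  have h1 : Set.EqOn (fun x => (1-x) ^ (2*β) * (c * (((1-s)/(1-x)) * (1 - (1-s)/(1-x))) ^ β))
      (fun x => (c * (1-s) ^ β) * (s - x) ^ β) (Set.uIcc 0 s) := by
    intro x hx
    rw [Set.uIcc_of_le hs] at hx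
    have hk := key (x := 1 - x) (s := 1 - s) (by linarith) (by linarith [hx.2]) (by linarith [hx.2])
    simp only
    have e : (1:ℝ) - x - (1 - s) = s - x := by ring
    rw [e] at hk
    calc (1-x) ^ (2*β) * (c * (((1-s)/(1-x)) * (1 - (1-s)/(1-x))) ^ β)
        = c * ((1-x) ^ (2*β) * (((1-s)/(1-x)) * (1 - (1-s)/(1-x))) ^ β) := by ring
      _ = (c * (1-s) ^ β) * (s - x) ^ β := by rw [hk]; ring
  rw [intervalIntegral.integral_congr h1, intervalIntegral.integral_const_mul,
      int_shift2 hs hs1.le]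

/-- The scaling function `h(s) = (s(1-s))^{β/2}`. -/
noncomputable def h (s : ℝ) : ℝ := (s * (1 - s)) ^ (β / 2)

/-- The Beta function `B(a,b) = ∫₀¹ t^{a-1}(1-t)^{b-1} dt`. -/
noncomputable def Bfun (a b : ℝ) : ℝ := ∫ t in (0:ℝ)..1, t ^ (a - 1) * (1 - t) ^ (b - 1)

/-- The second-moment integral operator `K`. -/
noncomputable def K (f : ℝ → ℝ) (s : ℝ) : ℝ :=
  (2 / (2 * β + 1)) *
      ((∫ x in s..1, x ^ (2 * β) * f (s / x)) +
        ∫ x in (0:ℝ)..s, (1 - x) ^ (2 * β) * f ((1 - s) / (1 - x)))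
    + 2 * Bfun (β + 1) (β + 1) * (h s) ^ 2 / (β + 1)

/-- The constant `c₂ = 2 B(β+1,β+1)(2β+1)/(3(1-β))`. -/
noncomputable def c₂ : ℝ := 2 * Bfun (β + 1) (β + 1) * (2 * β + 1) / (3 * (1 - β))

lemma scalar_id :
    (2 / (2*β+1)) * (c₂ / (β+1)) + 2 * Bfun (β+1) (β+1) / (β+1) = c₂ := by
  have hb := beta_sq
  have h0 := beta_pos
  have h1 := beta_lt_one
  have d1 : (2*β+1) ≠ 0 := by linarith
  have d2 : (β+1) ≠ 0 := by linarith
  have d3 : (3*(1-β)) ≠ 0 := by intro h; nlinarith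
  have d4 : (1-β) ≠ 0 := by intro h; nlinarith
  unfold c₂
  set B := Bfun (β+1) (β+1) with hB
  field_simp
  linear_combination (-2 * B) * hb

/-- The function `s ↦ c₂ h(s)² = c₂ (s(1-s))^β` is a fixed point of the second-moment
integral operator `K` on `[0,1]`. -/
theorem second_moment_fixed_point :
    ∀ s ∈ Set.Icc (0 : ℝ) 1,
      K (fun t => c₂ * (t * (1 - t)) ^ β) s = c₂ * (s * (1 - s)) ^ β := by
  intro s hs
  obtain ⟨hs0, hs1⟩ := hs
  have hb0 := beta_pos
  have hb1 := beta_lt_one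
  rcases eq_or_lt_of_le hs0 with h0 | h0
  · -- s = 0
    subst h0
    unfold K h
    simp [Real.zero_rpow hb0.ne', Real.zero_rpow (show β/2 ≠ 0 by positivity)]
  rcases eq_or_lt_of_le hs1 with h1 | h1
  · -- s = 1
    subst h1
    unfold K h
    simp [Real.zero_rpow hb0.ne', Real.zero_rpow (show β/2 ≠ 0 by positivity)]
  · -- 0 < s < 1
    unfold K h
    simp only []
    rw [int1 h0 hs1 c₂, int2 hs0 h1 c₂]
    have hss : (0:ℝ) ≤ s*(1-s) := by nlinarith
    have hsq : ((s*(1-s))^(β/2))^2 = (s*(1-s))^β := by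
      rw [← Real.rpow_natCast ((s*(1-s))^(β/2)) 2, ← Real.rpow_mul hss]
      norm_num
    have e1 : (1-s)^(β+1) = (1-s)^β * (1-s) := by
      rw [Real.rpow_add (by linarith) β 1, Real.rpow_one]
    have e2 : s^(β+1) = s^β * s := by rw [Real.rpow_add h0, Real.rpow_one]
    have e3 : (s*(1-s))^β = s^β * (1-s)^β := Real.mul_rpow h0.le (by linarith)
    rw [hsq, e1, e2, e3]
    linear_combination (s^β * (1-s)^β) * scalar_id
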